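/- Let m ≥ 1 and let J ⊆ A be the ideal generated by τ^m·x − 𝐟_(m−1), 𝐟_m, h·x, and h^(2m) (the ideal J_n for n = 2m−1). Then an element a of the quotient ring A/J is an additive torsion element (i.e. k·a = 0 for some integer k ≥ 1) if and only if a lies in the ideal of A/J generated by the class of ε. (Proposition 4.6(iii), case n = 2m−1.) -/

import Mathlib

/- Context: `A = ℤ[ε,τ,σ,h,x]/(2ε, τσ-1)` models `𝒜[h,x]` where
`𝒜 = ℤ[ε,τ,τ⁻¹]/(2ε)`, and for `m ≥ 0`,
`𝐟_m = ∑_{a+2b=m} C(a+b,b)·ε^(2a+1)·τ^b·h^(2b) ∈ A`. -/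

noncomputable section

open MvPolynomial

abbrev Apre : Type := MvPolynomial (Fin 5) ℤ  -- ε, τ, σ, h, x

def AI : Ideal Apre := Ideal.span {2 * X 0, X 1 * X 2 - 1}

abbrev A : Type := Apre ⧸ AI

def ε : A := Ideal.Quotient.mk AI (X 0)
def τ : A := Ideal.Quotient.mk AI (X 1)
def σ : A := Ideal.Quotient.mk AI (X 2)
def h : A := Ideal.Quotient.mk AI (X 3)
def x : A := Ideal.Quotient.mk AI (X 4)

def f (m : ℕ) : A :=
  ∑ b ∈ Finset.range (m / 2 + 1),
    (Nat.choose (m - b) b : A) * ε ^ (2 * (m - 2 * b) + 1) * τ ^ b * h ^ (2 * b)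

def J (m : ℕ) : Ideal A := Ideal.span {τ ^ m * x - f (m - 1), f m, h * x, h ^ (2 * m)}

set_option synthInstance.maxHeartbeats 1000000
set_option maxHeartbeats 1000000

-- ### auxiliary machinery

open LaurentPolynomial

abbrev Sq (m : ℕ) : Type := Polynomial ℤ ⧸ Ideal.span {(Polynomial.X : Polynomial ℤ) ^ (2*m)}
abbrev Rq (m : ℕ) : Type := LaurentPolynomial (Sq m)
def K (m : ℕ) : Ideal Apre := Ideal.span {X 0, X 1 * X 2 - 1, X 4, X 3 ^ (2*m)}
def Xbar (m : ℕ) : Sq m := Ideal.Quotient.mk _ Polynomial.X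

lemma Sq_torsionfree (m : ℕ) (k : ℤ) (hk : 1 ≤ k) (s : Sq m) (hs : k • s = 0) : s = 0 := by
  obtain ⟨q, rfl⟩ := Ideal.Quotient.mk_surjective s
  rw [← map_zsmul, Ideal.Quotient.eq_zero_iff_mem] at hs
  rw [Ideal.Quotient.eq_zero_iff_mem]
  rw [Ideal.mem_span_singleton] at hs ⊢
  rw [zsmul_eq_mul] at hs
  have hX : ¬ (Polynomial.X : Polynomial ℤ) ∣ (k : Polynomial ℤ) := by
    intro hd
    have := Polynomial.X_dvd_iff.mp hd
    simp at this
    omega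
  exact (Polynomial.prime_X (R := ℤ)).pow_dvd_of_dvd_mul_left _ hX hs

lemma Rq_torsionfree (m : ℕ) (k : ℤ) (hk : 1 ≤ k) (r : Rq m) (hr : k • r = 0) : r = 0 := by
  ext n
  have h1 : (k • r).coeff n = 0 := by rw [hr]; rfl
  have h2 : k • (r.coeff n) = 0 := by rw [← h1]; rfl
  simpa using Sq_torsionfree m k hk (r.coeff n) h2

def v (m : ℕ) : Fin 5 → Rq m
  | 0 => 0
  | 1 => LaurentPolynomial.T 1
  | 2 => LaurentPolynomial.T (-1)
  | 3 => LaurentPolynomial.C (Xbar m)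
  | 4 => 0

def Phi (m : ℕ) : Apre →+* Rq m := MvPolynomial.eval₂Hom (Int.castRingHom (Rq m)) (v m)

abbrev B (m : ℕ) : Type := Apre ⧸ K m
def mkK (m : ℕ) : Apre →+* B m := Ideal.Quotient.mk (K m)

lemma tau_mul_sigma (m : ℕ) : mkK m (X 1) * mkK m (X 2) = 1 := by
  rw [← map_mul, ← sub_eq_zero, ← map_one (mkK m), ← map_sub, mkK,
    Ideal.Quotient.eq_zero_iff_mem]
  exact Ideal.subset_span (by simp [Set.mem_insert_iff])

def tauUnit (m : ℕ) : (B m)ˣ where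
  val := mkK m (X 1)
  inv := mkK m (X 2)
  val_inv := tau_mul_sigma m
  inv_val := by rw [mul_comm]; exact tau_mul_sigma m

lemma h_pow_zero (m : ℕ) : (mkK m (X 3)) ^ (2*m) = 0 := by
  rw [← map_pow, mkK, Ideal.Quotient.eq_zero_iff_mem]
  exact Ideal.subset_span (by simp [Set.mem_insert_iff])

def fS (m : ℕ) : Sq m →+* B m :=
  Ideal.Quotient.lift _ ((Polynomial.aeval (mkK m (X 3))).toRingHom) (by
    intro a ha
    rw [Ideal.mem_span_singleton] at ha
    obtain ⟨c, rfl⟩ := ha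
    simp [h_pow_zero m])

def psi (m : ℕ) : Rq m →+* B m :=
  AddMonoidAlgebra.liftNCRingHom (fS m)
    ((Units.coeHom (B m)).comp (zpowersHom (B m)ˣ (tauUnit m)))
    (fun _ _ => Commute.all _ _)

lemma psi_single (m : ℕ) (n : ℤ) (s : Sq m) :
    psi m (AddMonoidAlgebra.single n s) = fS m s * ((tauUnit m ^ n : (B m)ˣ) : B m) :=
  AddMonoidAlgebra.liftNC_single _ _ _ _

lemma psi_T (m : ℕ) (n : ℤ) :
    psi m (LaurentPolynomial.T n) = ((tauUnit m ^ n : (B m)ˣ) : B m) := by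
  rw [LaurentPolynomial.T, psi_single, map_one, one_mul]

lemma psi_C (m : ℕ) (s : Sq m) : psi m (LaurentPolynomial.C s) = fS m s := by
  have h1 : (LaurentPolynomial.C s : Rq m) = AddMonoidAlgebra.single 0 s := rfl
  rw [h1, psi_single, zpow_zero]
  simp

lemma psi_comp_Phi (m : ℕ) : (psi m).comp (Phi m) = mkK m := by
  apply MvPolynomial.ringHom_ext
  · intro r
    simp only [RingHom.comp_apply, Phi, eval₂Hom_C]
    simp [map_intCast]
  · intro i
    rw [RingHom.comp_apply, Phi, eval₂Hom_X']
    fin_cases i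
    · show psi m (v m 0) = mkK m (X 0)
      rw [show v m 0 = 0 from rfl, map_zero, eq_comm, mkK, Ideal.Quotient.eq_zero_iff_mem]
      exact Ideal.subset_span (by simp [Set.mem_insert_iff])
    · show psi m (v m 1) = mkK m (X 1)
      rw [show v m 1 = LaurentPolynomial.T 1 from rfl, psi_T]
      simp [tauUnit]
    · show psi m (v m 2) = mkK m (X 2)
      rw [show v m 2 = LaurentPolynomial.T (-1) from rfl, psi_T, zpow_neg, zpow_one]
      rfl
    · show psi m (v m 3) = mkK m (X 3)
      rw [show v m 3 = LaurentPolynomial.C (Xbar m) from rfl, psi_C]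
      simp [fS, Xbar]
    · show psi m (v m 4) = mkK m (X 4)
      rw [show v m 4 = 0 from rfl, map_zero, eq_comm, mkK, Ideal.Quotient.eq_zero_iff_mem]
      exact Ideal.subset_span (by simp [Set.mem_insert_iff])

lemma ker_Phi_le (m : ℕ) (p : Apre) (hp : Phi m p = 0) : p ∈ K m := by
  have h2 := congrArg (psi m) hp
  rw [← RingHom.comp_apply, psi_comp_Phi, map_zero] at h2
  rwa [mkK, Ideal.Quotient.eq_zero_iff_mem] at h2

-- f is divisible by ε
lemma eps_dvd_f (m : ℕ) : ε ∣ f m := by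
  apply Finset.dvd_sum
  intro b _
  exact (((dvd_pow_self ε (Nat.succ_ne_zero _)).mul_left _).mul_right _).mul_right _

-- relations in A
lemma AI_tau_sigma : τ * σ = 1 := by
  rw [τ, σ, ← map_mul, ← sub_eq_zero, ← map_one (Ideal.Quotient.mk AI), ← map_sub,
    Ideal.Quotient.eq_zero_iff_mem]
  exact Ideal.subset_span (by simp [Set.mem_insert_iff])

lemma two_eps : (2 : ℤ) • ε = 0 := by
  rw [ε, ← map_zsmul, Ideal.Quotient.eq_zero_iff_mem]
  have : (2 : ℤ) • (X 0 : Apre) = 2 * X 0 := by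
    rw [zsmul_eq_mul]; norm_num
  rw [this]
  exact Ideal.subset_span (by simp [Set.mem_insert_iff])

-- the lifted hom A → Rq m
def PhiA (m : ℕ) : A →+* Rq m :=
  Ideal.Quotient.lift AI (Phi m) (by
    intro p hp
    rw [AI] at hp
    rw [← RingHom.mem_ker]
    refine Ideal.span_le.mpr ?_ hp
    rintro q hq
    simp only [Set.mem_insert_iff, Set.mem_singleton_iff] at hq
    rcases hq with rfl | rfl <;> rw [SetLike.mem_coe, RingHom.mem_ker]
    · rw [map_mul, show Phi m (X 0) = v m 0 from eval₂Hom_X' _ _ _, show v m 0 = 0 from rfl,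
        mul_zero]
    · rw [map_sub, map_mul, map_one, show Phi m (X 1) = v m 1 from eval₂Hom_X' _ _ _,
        show Phi m (X 2) = v m 2 from eval₂Hom_X' _ _ _,
        show v m 1 = LaurentPolynomial.T 1 from rfl,
        show v m 2 = LaurentPolynomial.T (-1) from rfl, ← T_add]
      norm_num [T_zero])

lemma PhiA_eps (m : ℕ) : PhiA m ε = 0 := by
  rw [ε, PhiA, Ideal.Quotient.lift_mk, show Phi m (X 0) = v m 0 from eval₂Hom_X' _ _ _]
  rfl

lemma PhiA_x (m : ℕ) : PhiA m x = 0 := by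
  rw [x, PhiA, Ideal.Quotient.lift_mk, show Phi m (X 4) = v m 4 from eval₂Hom_X' _ _ _]
  rfl

lemma PhiA_h (m : ℕ) : PhiA m h = LaurentPolynomial.C (Xbar m) := by
  rw [h, PhiA, Ideal.Quotient.lift_mk]
  exact eval₂Hom_X' _ _ _

lemma PhiA_f (m m' : ℕ) : PhiA m (f m') = 0 := by
  obtain ⟨c, hc⟩ := eps_dvd_f m'
  rw [hc, map_mul, PhiA_eps, zero_mul]

lemma PhiA_h_pow (m : ℕ) : PhiA m (h ^ (2*m)) = 0 := by
  rw [map_pow, PhiA_h, ← map_pow]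
  have : Xbar m ^ (2*m) = 0 := by
    rw [Xbar, ← map_pow, Ideal.Quotient.eq_zero_iff_mem]
    exact Ideal.subset_span rfl
  rw [this, map_zero]

def Psi (m : ℕ) : (A ⧸ J m) →+* Rq m :=
  Ideal.Quotient.lift (J m) (PhiA m) (by
    intro p hp
    rw [J] at hp
    rw [← RingHom.mem_ker]
    refine Ideal.span_le.mpr ?_ hp
    rintro q hq
    simp only [Set.mem_insert_iff, Set.mem_singleton_iff] at hq
    rcases hq with rfl | rfl | rfl | rfl <;> rw [SetLike.mem_coe, RingHom.mem_ker]
    · rw [map_sub, map_mul, PhiA_x, PhiA_f, mul_zero, sub_zero]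
    · exact PhiA_f m _
    · rw [map_mul, PhiA_x, mul_zero]
    · exact PhiA_h_pow m)

-- image of K in A/J lands in span {ε}
lemma K_image (m : ℕ) (hm : 1 ≤ m) (p : Apre) (hp : p ∈ K m) :
    Ideal.Quotient.mk (J m) (Ideal.Quotient.mk AI p) ∈
      Ideal.span {Ideal.Quotient.mk (J m) ε} := by
  set g : Apre →+* (A ⧸ J m) := (Ideal.Quotient.mk (J m)).comp (Ideal.Quotient.mk AI) with hg
  have hle : K m ≤ Ideal.comap g (Ideal.span {Ideal.Quotient.mk (J m) ε}) := by
    rw [K]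
    refine Ideal.span_le.mpr ?_
    rintro q hq
    simp only [Set.mem_insert_iff, Set.mem_singleton_iff] at hq
    rcases hq with rfl | rfl | rfl | rfl <;> rw [SetLike.mem_coe, Ideal.mem_comap]
    · exact Ideal.subset_span rfl
    · have : Ideal.Quotient.mk AI (X 1 * X 2 - 1) = 0 := by
        rw [Ideal.Quotient.eq_zero_iff_mem]
        exact Ideal.subset_span (by simp [Set.mem_insert_iff])
      rw [hg, RingHom.comp_apply, this, map_zero]
      exact Ideal.zero_mem _
    · show Ideal.Quotient.mk (J m) x ∈ _
      have h1 : Ideal.Quotient.mk (J m) (τ ^ m * x) = Ideal.Quotient.mk (J m) (f (m-1)) := by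
        rw [← sub_eq_zero, ← map_sub, Ideal.Quotient.eq_zero_iff_mem]
        exact Ideal.subset_span (by simp [Set.mem_insert_iff])
      have h2 : x = σ ^ m * (τ ^ m * x) := by
        rw [← mul_assoc, ← mul_pow, mul_comm σ τ, AI_tau_sigma, one_pow, one_mul]
      obtain ⟨c, hc⟩ := eps_dvd_f (m - 1)
      rw [h2, map_mul, h1, hc, map_mul]
      exact Ideal.mul_mem_left _ _ (Ideal.mem_span_singleton'.mpr ⟨Ideal.Quotient.mk (J m) c, mul_comm (Ideal.Quotient.mk (J m) c) _⟩)
    · show Ideal.Quotient.mk (J m) (h ^ (2*m)) ∈ _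
      have : Ideal.Quotient.mk (J m) (h ^ (2*m)) = 0 := by
        rw [Ideal.Quotient.eq_zero_iff_mem]
        exact Ideal.subset_span (by simp [Set.mem_insert_iff])
      rw [this]
      exact Ideal.zero_mem _
  exact hle hp

/- Statement 12 (Proposition 4.6(iii), case `n = 2m-1`): an element of `A/J`
is additively torsion iff it lies in the ideal generated by the class of `ε`. -/
theorem torsion_eq_eps_ideal_odd (m : ℕ) (hm : 1 ≤ m) (a : A ⧸ J m) :
    (∃ k : ℤ, 1 ≤ k ∧ k • a = 0) ↔ a ∈ Ideal.span {Ideal.Quotient.mk (J m) ε} := by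
  constructor
  · rintro ⟨k, hk, hka⟩
    obtain ⟨b, rfl⟩ := Ideal.Quotient.mk_surjective a
    obtain ⟨p, rfl⟩ := Ideal.Quotient.mk_surjective b
    have h1 : k • Psi m (Ideal.Quotient.mk (J m) (Ideal.Quotient.mk AI p)) = 0 := by
      rw [← map_zsmul, hka, map_zero]
    have h2 := Rq_torsionfree m k hk _ h1
    have h3 : Phi m p = 0 := by
      rw [Psi, Ideal.Quotient.lift_mk, PhiA, Ideal.Quotient.lift_mk] at h2
      exact h2
    exact K_image m hm p (ker_Phi_le m p h3)
  · intro ha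
    refine ⟨2, by norm_num, ?_⟩
    obtain ⟨c, hc⟩ := Ideal.mem_span_singleton'.mp ha
    rw [← hc, ← mul_smul_comm, ← map_zsmul, two_eps, map_zero]
    exact mul_zero c

end
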